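/- Let k be a positive integer and let S_k = { i/k + 1/(2k^2) : i ∈ {1,…,k} }. If R ⊆ S_k is a subset whose sum x = Σ_{r∈R} r again lies in S_k, then R = {x}, i.e., R is the singleton containing x. -/

import Mathlib

/-- Unique angles lemma: if the sum of a subset `R` of `S_k` again lies in `S_k`,
then `R` is a singleton containing that sum. -/
theorem stmt0 (k : ℕ) (hk : 0 < k)
    (S : Finset ℚ)
    (hS : S = (Finset.Icc 1 k).image (fun i : ℕ => (i : ℚ) / k + 1 / (2 * k ^ 2)))
    (R : Finset ℚ) (hR : R ⊆ S)
    (x : ℚ) (hx : x = ∑ r ∈ R, r) (hxS : x ∈ S) :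
    R = {x} := by
  subst hS hx
  have hk0 : (k : ℚ) ≠ 0 := Nat.cast_ne_zero.mpr hk.ne'
  set f : ℕ → ℚ := fun i : ℕ => (i : ℚ) / k + 1 / (2 * k ^ 2) with hf
  have hinj : Function.Injective f := by
    intro a b hab
    simp only [hf] at hab
    have h2 : (a : ℚ) = b := by
      field_simp at hab
      have h3 : ((a : ℚ) - b) * (k * 2) = 0 := by linear_combination hab
      exact sub_eq_zero.mp ((mul_eq_zero.mp h3).resolve_right (mul_ne_zero hk0 two_ne_zero))
    exact_mod_cast h2
  obtain ⟨T, hTsub, rfl⟩ := Finset.subset_image_iff.mp hR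
  rw [Finset.sum_image (fun a _ b _ h => hinj h)] at hxS ⊢
  obtain ⟨j, hj, hje⟩ := Finset.mem_image.mp hxS
  -- hje : f j = ∑ i in T, f i
  have hsum : (∑ i ∈ T, f i) = (∑ i ∈ T, (i : ℚ)) / k + (T.card : ℚ) / (2 * k ^ 2) := by
    simp only [hf, Finset.sum_add_distrib, Finset.sum_div, Finset.sum_const,
      nsmul_eq_mul, mul_one_div]
  have key : 2 * k * (∑ i ∈ T, i) + T.card = 2 * k * j + 1 := by
    have h := hje
    rw [hsum] at h
    simp only [hf] at h
    field_simp at h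
    have h2 : ((2 * k * (∑ i ∈ T, i) + T.card : ℕ) : ℚ) * k = ((2 * k * j + 1 : ℕ) : ℚ) * k := by
      push_cast
      linear_combination -(k : ℚ) * h
    exact_mod_cast mul_right_cancel₀ hk0 h2
  have hcard_le : T.card ≤ k := by
    calc T.card ≤ (Finset.Icc 1 k).card := Finset.card_le_card hTsub
    _ = k := by simp
  have hmod : T.card % (2 * k) = 1 % (2 * k) := by
    have := congrArg (· % (2 * k)) key
    simpa [Nat.mul_add_mod] using this
  have hcard1 : T.card = 1 := by
    rw [Nat.mod_eq_of_lt (by omega), Nat.mod_eq_of_lt (by omega)] at hmod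
    exact hmod
  obtain ⟨i, hi⟩ := Finset.card_eq_one.mp hcard1
  subst hi
  simp
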